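/- As M → 0+, h(a(M)) = ∫_{0}^{∞} dt/√(t(t + a(M))(t^2 + 3a(M)t + 1 + 3a(M)^2)) tends to +∞. -/

import Mathlib

open MeasureTheory Set

lemma integ_aux (a : ℝ) (ha : 0 < a) :
    IntegrableOn (fun t : ℝ => 1 / Real.sqrt (t * (t + a) * (t ^ 2 + 3 * a * t + 1 + 3 * a ^ 2)))
      (Ioi 0) := by
  have hmeas : Measurable fun t : ℝ =>
      1 / Real.sqrt (t * (t + a) * (t ^ 2 + 3 * a * t + 1 + 3 * a ^ 2)) := by
    simp only [one_div]
    exact (Real.continuous_sqrt.comp (by continuity)).measurable.inv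
  rw [← Ioc_union_Ioi_eq_Ioi (by norm_num : (0:ℝ) ≤ 1)]
  refine IntegrableOn.union ?_ ?_
  · -- on Ioc 0 1, bound by (√a)⁻¹ * t ^ (-1/2)
    refine Integrable.mono' (g := fun t => (Real.sqrt a)⁻¹ * t ^ (-(1/2) : ℝ)) ?_
      (hmeas.aestronglyMeasurable) ?_
    · refine Integrable.const_mul ?_ _
      have := (intervalIntegral.intervalIntegrable_rpow' (a := 0) (b := 1)
        (by norm_num : (-1:ℝ) < -(1/2)))
      rw [intervalIntegrable_iff_integrableOn_Ioc_of_le (by norm_num : (0:ℝ) ≤ 1)] at this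
      exact this
    · rw [ae_restrict_iff' measurableSet_Ioc]
      refine ae_of_all _ fun t ht => ?_
      obtain ⟨ht0, ht1⟩ := ht
      have hp : a * t ≤ t * (t + a) * (t ^ 2 + 3 * a * t + 1 + 3 * a ^ 2) := by
        have key : 0 ≤ t * (t + a) * (3 * a * t + 3 * a ^ 2) := by positivity
        have key2 : 0 ≤ t * (t + a) * t ^ 2 := by positivity
        nlinarith [sq_nonneg t, key, key2]
      have hat : 0 < a * t := by positivity
      have h1 : Real.sqrt (a * t) ≤ Real.sqrt _ := Real.sqrt_le_sqrt hp
      have h2 : 0 < Real.sqrt (a * t) := Real.sqrt_pos.2 hat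
      have : 1 / Real.sqrt (t * (t + a) * (t ^ 2 + 3 * a * t + 1 + 3 * a ^ 2))
          ≤ 1 / Real.sqrt (a * t) := one_div_le_one_div_of_le h2 h1
      rw [Real.norm_eq_abs, abs_of_nonneg (by positivity)]
      refine this.trans (le_of_eq ?_)
      show 1 / Real.sqrt (a * t) = (Real.sqrt a)⁻¹ * t ^ (-(1/2) : ℝ)
      rw [Real.sqrt_mul ha.le, Real.rpow_neg ht0.le, ← Real.sqrt_eq_rpow, one_div, mul_inv]
  · refine Integrable.mono' (g := fun t => t ^ (-2 : ℝ)) ?_ hmeas.aestronglyMeasurable ?_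
    · exact integrableOn_Ioi_rpow_of_lt (by norm_num) one_pos
    · rw [ae_restrict_iff' measurableSet_Ioi]
      refine ae_of_all _ fun t ht => ?_
      have ht1 : (1:ℝ) < t := ht
      have ht0 : (0:ℝ) < t := by linarith
      have hp : t ^ 4 ≤ t * (t + a) * (t ^ 2 + 3 * a * t + 1 + 3 * a ^ 2) := by
        have k1 : 0 ≤ t * (t + a) * (3 * a * t + 1 + 3 * a ^ 2) := by positivity
        have k2 : 0 ≤ t * a * t ^ 2 := by positivity
        nlinarith [k1, k2]
      have h2 : (0:ℝ) < t ^ 2 := by positivity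
      have h1 : (t:ℝ)^2 ≤ Real.sqrt (t * (t + a) * (t ^ 2 + 3 * a * t + 1 + 3 * a ^ 2)) := by
        rw [show t ^ 4 = (t^2)^2 by ring] at hp
        calc (t:ℝ)^2 = Real.sqrt ((t^2)^2) := (Real.sqrt_sq (by positivity)).symm
        _ ≤ _ := Real.sqrt_le_sqrt hp
      rw [Real.norm_eq_abs, abs_of_nonneg (by positivity)]
      calc 1 / Real.sqrt (t * (t + a) * (t ^ 2 + 3 * a * t + 1 + 3 * a ^ 2))
          ≤ 1 / t ^ 2 := one_div_le_one_div_of_le h2 h1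
        _ = t ^ (-2:ℝ) := by
            rw [Real.rpow_neg ht0.le, one_div,
              show ((2:ℝ)) = ((2:ℕ):ℝ) by norm_num, Real.rpow_natCast]

lemma lower_aux (a : ℝ) (h0 : 0 < a) (h1 : a < 1) :
    (1/4) * (-Real.log a) ≤ ∫ t in Ioi (0:ℝ),
      1 / Real.sqrt (t * (t + a) * (t ^ 2 + 3 * a * t + 1 + 3 * a ^ 2)) := by
  have hint := integ_aux a h0
  have hsub : Ioc a 1 ⊆ Ioi (0:ℝ) := fun t ht => h0.trans ht.1
  have hg : IntegrableOn (fun t : ℝ => (4*t)⁻¹) (Ioc a 1) := by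
    refine (ContinuousOn.integrableOn_Icc ?_).mono_set Ioc_subset_Icc_self
    refine (continuous_const.mul continuous_id).continuousOn.inv₀ fun t ht => ?_
    have ht0 : 0 < t := h0.trans_le ht.1
    exact mul_ne_zero (by norm_num) ht0.ne'
  have step1 : ∫ t in Ioc a 1, (4*t)⁻¹
      ≤ ∫ t in Ioc a 1, 1 / Real.sqrt (t * (t + a) * (t ^ 2 + 3 * a * t + 1 + 3 * a ^ 2)) := by
    refine setIntegral_mono_on hg (hint.mono_set hsub) measurableSet_Ioc fun t ht => ?_
    obtain ⟨hta, ht1⟩ := ht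
    have ht0 : 0 < t := h0.trans hta
    have hple : t * (t + a) * (t ^ 2 + 3 * a * t + 1 + 3 * a ^ 2) ≤ (4*t)^2 := by
      have f2 : t ^ 2 + 3 * a * t + 1 + 3 * a ^ 2 ≤ 8 := by
        have e1 : a * t ≤ 1 := by nlinarith
        have e2 : a ^ 2 ≤ 1 := by nlinarith
        have e3 : t ^ 2 ≤ 1 := by nlinarith
        linarith
      have f1 : t * (t + a) ≤ 2 * t ^ 2 := by nlinarith
      nlinarith [mul_le_mul f1 f2 (by positivity : (0:ℝ) ≤ t ^ 2 + 3 * a * t + 1 + 3 * a ^ 2)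
        (by positivity : (0:ℝ) ≤ 2 * t ^ 2)]
    have hpp : 0 < t * (t + a) * (t ^ 2 + 3 * a * t + 1 + 3 * a ^ 2) := by positivity
    have hs : Real.sqrt (t * (t + a) * (t ^ 2 + 3 * a * t + 1 + 3 * a ^ 2)) ≤ 4*t := by
      calc Real.sqrt (t * (t + a) * (t ^ 2 + 3 * a * t + 1 + 3 * a ^ 2))
          ≤ Real.sqrt ((4*t)^2) := Real.sqrt_le_sqrt hple
        _ = 4*t := Real.sqrt_sq (by positivity)
    rw [← one_div]
    exact one_div_le_one_div_of_le (Real.sqrt_pos.2 hpp) hs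
  have step2 : ∫ t in Ioc a 1, 1 / Real.sqrt (t * (t + a) * (t ^ 2 + 3 * a * t + 1 + 3 * a ^ 2))
      ≤ ∫ t in Ioi (0:ℝ), 1 / Real.sqrt (t * (t + a) * (t ^ 2 + 3 * a * t + 1 + 3 * a ^ 2)) := by
    refine setIntegral_mono_set hint (ae_of_all _ fun t => by positivity)
      (HasSubset.Subset.eventuallyLE hsub)
  have hcalc : ∫ t in Ioc a 1, (4*t)⁻¹ = (1/4) * (-Real.log a) := by
    rw [← intervalIntegral.integral_of_le h1.le]
    have : ∀ t : ℝ, (4*t)⁻¹ = (4:ℝ)⁻¹ * t⁻¹ := fun t => by rw [mul_inv]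
    simp_rw [this]
    rw [intervalIntegral.integral_const_mul, integral_inv (by
      rw [Set.uIcc_of_le h1.le]
      rintro ⟨h', -⟩
      linarith)]
    rw [one_div, Real.log_inv]
    ring
  linarith

/-- As `M → 0⁺`, `h(a(M)) = ∫_0^∞ dt/√(t(t+a(M))(t^2+3a(M)t+1+3a(M)^2))` tends to `+∞`. -/
theorem h_tendsto_atTop (a : ℝ → ℝ)
    (ha : ∀ M : ℝ, 0 < M → 0 < a M ∧ a M + (a M) ^ 3 = M) :
    Filter.Tendsto
      (fun M => ∫ t in Ioi (0 : ℝ),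
        1 / Real.sqrt (t * (t + a M) * (t ^ 2 + 3 * a M * t + 1 + 3 * (a M) ^ 2)))
      (nhdsWithin 0 (Set.Ioi 0)) Filter.atTop := by
  rw [Filter.tendsto_atTop]
  intro C
  set δ := min 1 (Real.exp (-(4*C))) with hδdef
  have hδ : 0 < δ := lt_min one_pos (Real.exp_pos _)
  filter_upwards [Ioo_mem_nhdsGT_of_mem (show (0:ℝ) ∈ Ico 0 δ from ⟨le_refl 0, hδ⟩)]
    with M hM
  obtain ⟨hM0, hMδ⟩ := hM
  obtain ⟨ha0, haM⟩ := ha M hM0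
  have haux : a M ≤ M := by nlinarith [pow_pos ha0 3]
  have ha1 : a M < 1 := haux.trans_lt (hMδ.trans_le (min_le_left _ _))
  have hlog : Real.log (a M) ≤ -(4*C) := by
    have h1 : Real.log (a M) ≤ Real.log M := Real.log_le_log ha0 haux
    have h2 : M ≤ Real.exp (-(4*C)) := (hMδ.trans_le (min_le_right _ _)).le
    have h3 : Real.log M ≤ -(4*C) := (Real.log_le_iff_le_exp hM0).2 h2
    linarith
  have := lower_aux (a M) ha0 ha1
  linarith
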